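/- For 0 < z < 1, the double polylogarithm satisfies Li_{2,1}(1−z) = 2 Li_3(z) − (log z)·Li_2(z) − ζ(2)·log z − 2ζ(3). -/

import Mathlib

open Real Set Filter Topology

/-- The polylogarithm `Li_k(z) = ∑_{m ≥ 1} z^m/m^k`. -/
noncomputable def Li (k : ℕ) (z : ℝ) : ℝ := ∑' m : ℕ, z ^ (m + 1) / ((m : ℝ) + 1) ^ k

/-- The double polylogarithm `Li_{2,1}(z) = ∑_{1 ≤ m < n} z^n/(m² n)`,
parametrized by `m = a+1`, `n = a+b+2`. -/
noncomputable def Li21 (z : ℝ) : ℝ :=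
  ∑' p : ℕ × ℕ,
    z ^ (p.1 + p.2 + 2) / (((p.1 : ℝ) + 1) ^ 2 * ((p.1 : ℝ) + (p.2 : ℝ) + 2))

/-- `ζ(3) = ∑_{m ≥ 1} 1/m³`. -/
noncomputable def zeta3 : ℝ := ∑' m : ℕ, 1 / ((m : ℝ) + 1) ^ 3

lemma summable_li {r : ℝ} (h0 : 0 ≤ r) (h1 : r < 1) (k : ℕ) :
    Summable (fun m : ℕ => r ^ (m + 1) / ((m : ℝ) + 1) ^ k) := by
  refine Summable.of_nonneg_of_le (fun m => by positivity) (fun m => ?_)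
    (summable_geometric_of_lt_one h0 h1)
  calc r ^ (m + 1) / ((m : ℝ) + 1) ^ k ≤ r ^ (m + 1) :=
        div_le_self (by positivity) (one_le_pow₀ (by linarith [Nat.cast_nonneg (α := ℝ) m]))
    _ = r ^ m * r := pow_succ r m
    _ ≤ r ^ m * 1 := mul_le_mul_of_nonneg_left h1.le (pow_nonneg h0 m)
    _ = r ^ m := mul_one _

lemma li_mul (k : ℕ) {z : ℝ} (hz : z ≠ 0) :
    ∑' m : ℕ, z ^ m / ((m : ℝ) + 1) ^ k = Li k z / z := by
  rw [Li, eq_div_iff hz, ← tsum_mul_right]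
  congr 1; funext m
  rw [div_mul_eq_mul_div, mul_comm, ← pow_succ']

lemma hasDerivAt_Li (k : ℕ) {z : ℝ} (hz : z ∈ Ioo (0:ℝ) 1) :
    HasDerivAt (Li (k + 1)) (Li k z / z) z := by
  obtain ⟨hz0, hz1⟩ := hz
  set r : ℝ := (1 + z) / 2 with hr
  have hr0 : 0 < r := by positivity
  have hr1 : r < 1 := by simp only [hr]; linarith
  have hzr : z < r := by simp only [hr]; linarith
  have H : HasDerivAt (fun y : ℝ => ∑' m : ℕ, y ^ (m + 1) / ((m : ℝ) + 1) ^ (k + 1))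
      (∑' m : ℕ, z ^ m / ((m : ℝ) + 1) ^ k) z := by
    refine hasDerivAt_tsum_of_isPreconnected (u := fun m : ℕ => r ^ m)
      (g' := fun m y => y ^ m / ((m : ℝ) + 1) ^ k)
      (summable_geometric_of_lt_one hr0.le hr1) (isOpen_Ioo (a := (0:ℝ)) (b := r))
      (convex_Ioo _ _).isPreconnected (fun m y _ => ?_) (fun m y hy => ?_)
      (mem_Ioo.2 ⟨hz0, hzr⟩) ?_ (mem_Ioo.2 ⟨hz0, hzr⟩)
    · have h1 : HasDerivAt (fun y : ℝ => y ^ (m + 1) / ((m : ℝ) + 1) ^ (k + 1))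
          ((↑(m + 1) * y ^ m) / ((m : ℝ) + 1) ^ (k + 1)) y := by
        simpa using (hasDerivAt_pow (m + 1) y).div_const (((m : ℝ) + 1) ^ (k + 1))
      refine h1.congr_deriv (Eq.symm ?_)
      have hm : ((m : ℝ) + 1) ≠ 0 := by positivity
      push_cast
      field_simp
      ring
    · rw [Real.norm_eq_abs, abs_div, abs_pow, abs_of_nonneg hy.1.le,
        abs_of_nonneg (by positivity : (0:ℝ) ≤ ((m : ℝ) + 1) ^ k)]
      calc y ^ m / ((m : ℝ) + 1) ^ k ≤ y ^ m :=
            div_le_self (pow_nonneg hy.1.le m) (one_le_pow₀ (by linarith [Nat.cast_nonneg (α := ℝ) m]))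
        _ ≤ r ^ m := pow_le_pow_left₀ hy.1.le hy.2.le m
    · exact summable_li hz0.le hz1 (k + 1)
  rw [li_mul k hz0.ne'] at H
  exact H


lemma summable_li21 {x : ℝ} (h0 : 0 ≤ x) (h1 : x < 1) :
    Summable (fun p : ℕ × ℕ =>
      x ^ (p.1 + p.2 + 2) / (((p.1 : ℝ) + 1) ^ 2 * ((p.1 : ℝ) + (p.2 : ℝ) + 2))) := by
  have hs : Summable (fun p : ℕ × ℕ => x ^ p.1 * x ^ p.2) :=
    (summable_geometric_of_lt_one h0 h1).mul_of_nonneg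
      (summable_geometric_of_lt_one h0 h1) (fun n => pow_nonneg h0 n) (fun n => pow_nonneg h0 n)
  refine Summable.of_nonneg_of_le (fun p => by positivity) (fun p => ?_) hs
  have hd : (1:ℝ) ≤ ((p.1 : ℝ) + 1) ^ 2 * ((p.1 : ℝ) + (p.2 : ℝ) + 2) := by
    have h1 : (1:ℝ) ≤ ((p.1 : ℝ) + 1) ^ 2 :=
      one_le_pow₀ (by linarith [Nat.cast_nonneg (α := ℝ) p.1])
    nlinarith [Nat.cast_nonneg (α := ℝ) p.1, Nat.cast_nonneg (α := ℝ) p.2]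
  calc x ^ (p.1 + p.2 + 2) / (((p.1 : ℝ) + 1) ^ 2 * ((p.1 : ℝ) + (p.2 : ℝ) + 2))
      ≤ x ^ (p.1 + p.2 + 2) := div_le_self (by positivity) hd
    _ ≤ x ^ (p.1 + p.2) := pow_le_pow_of_le_one h0 h1.le (by omega)
    _ = x ^ p.1 * x ^ p.2 := pow_add x p.1 p.2

lemma hasDerivAt_Li21 {x : ℝ} (hx : x ∈ Ioo (0:ℝ) 1) :
    HasDerivAt Li21 (Li 2 x * (1 - x)⁻¹) x := by
  obtain ⟨hx0, hx1⟩ := hx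
  set r : ℝ := (1 + x) / 2 with hr
  have hr0 : 0 < r := by positivity
  have hr1 : r < 1 := by simp only [hr]; linarith
  have hxr : x < r := by simp only [hr]; linarith
  have H : HasDerivAt (fun y : ℝ => ∑' p : ℕ × ℕ,
        y ^ (p.1 + p.2 + 2) / (((p.1 : ℝ) + 1) ^ 2 * ((p.1 : ℝ) + (p.2 : ℝ) + 2)))
      (∑' p : ℕ × ℕ, x ^ (p.1 + p.2 + 1) / ((p.1 : ℝ) + 1) ^ 2) x := by
    refine hasDerivAt_tsum_of_isPreconnected (u := fun p : ℕ × ℕ => r ^ p.1 * r ^ p.2)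
      (g' := fun p y => y ^ (p.1 + p.2 + 1) / ((p.1 : ℝ) + 1) ^ 2)
      ((summable_geometric_of_lt_one hr0.le hr1).mul_of_nonneg
        (summable_geometric_of_lt_one hr0.le hr1)
        (fun n => pow_nonneg hr0.le n) (fun n => pow_nonneg hr0.le n))
      (isOpen_Ioo (a := (0:ℝ)) (b := r)) (convex_Ioo _ _).isPreconnected
      (fun p y _ => ?_) (fun p y hy => ?_)
      (mem_Ioo.2 ⟨hx0, hxr⟩) (summable_li21 hx0.le hx1) (mem_Ioo.2 ⟨hx0, hxr⟩)
    · have h1 : HasDerivAt (fun y : ℝ => y ^ (p.1 + p.2 + 2) /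
            (((p.1 : ℝ) + 1) ^ 2 * ((p.1 : ℝ) + (p.2 : ℝ) + 2)))
          ((↑(p.1 + p.2 + 2) * y ^ (p.1 + p.2 + 1)) /
            (((p.1 : ℝ) + 1) ^ 2 * ((p.1 : ℝ) + (p.2 : ℝ) + 2))) y := by
        simpa using (hasDerivAt_pow (p.1 + p.2 + 2) y).div_const _
      refine h1.congr_deriv (Eq.symm ?_)
      have hm : ((p.1 : ℝ) + 1) ≠ 0 := by positivity
      have hn : ((p.1 : ℝ) + (p.2 : ℝ) + 2) ≠ 0 := by positivity
      push_cast
      field_simp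
    · rw [Real.norm_eq_abs, abs_div, abs_pow, abs_of_nonneg hy.1.le,
        abs_of_nonneg (by positivity : (0:ℝ) ≤ ((p.1 : ℝ) + 1) ^ 2)]
      calc y ^ (p.1 + p.2 + 1) / ((p.1 : ℝ) + 1) ^ 2 ≤ y ^ (p.1 + p.2 + 1) :=
            div_le_self (pow_nonneg hy.1.le _)
              (one_le_pow₀ (by linarith [Nat.cast_nonneg (α := ℝ) p.1]))
        _ ≤ y ^ (p.1 + p.2) := pow_le_pow_of_le_one hy.1.le (by linarith [hy.2]) (by omega)
        _ ≤ r ^ (p.1 + p.2) := pow_le_pow_left₀ hy.1.le hy.2.le _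
        _ = r ^ p.1 * r ^ p.2 := pow_add r p.1 p.2
  have hval : (∑' p : ℕ × ℕ, x ^ (p.1 + p.2 + 1) / ((p.1 : ℝ) + 1) ^ 2)
      = Li 2 x * (1 - x)⁻¹ := by
    have hf : Summable (fun a : ℕ => ‖x ^ (a + 1) / ((a : ℝ) + 1) ^ 2‖) := by
      simpa [Real.norm_eq_abs, abs_of_nonneg, abs_div, abs_pow, abs_of_nonneg hx0.le,
        abs_of_nonneg (by positivity : ∀ a : ℕ, (0:ℝ) ≤ ((a : ℝ) + 1) ^ 2)] using
        (summable_li hx0.le hx1 2).abs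
    have hg : Summable (fun b : ℕ => ‖x ^ b‖) := by
      simpa [Real.norm_eq_abs, abs_pow, abs_of_nonneg hx0.le] using
        (summable_geometric_of_lt_one hx0.le hx1)
    have := tsum_mul_tsum_of_summable_norm hf hg
    rw [Li, ← tsum_geometric_of_lt_one hx0.le hx1, this]
    congr 1; funext p
    rw [div_mul_eq_mul_div, ← pow_add]
    congr 2
    omega
  rw [hval] at H
  exact H


lemma summable_inv_sq : Summable (fun m : ℕ => 1 / ((m : ℝ) + 1) ^ 2) := by
  have := (summable_nat_add_iff (f := fun n : ℕ => 1 / (n : ℝ) ^ 2) 1).2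
    (Real.summable_one_div_nat_pow.2 one_lt_two)
  simpa using this

lemma Li_zero (k : ℕ) : Li k 0 = 0 := by simp [Li]

lemma Li2_one : Li 2 1 = π ^ 2 / 6 := by
  have h := (hasSum_nat_add_iff' (f := fun n : ℕ => (1 : ℝ) / (n : ℝ) ^ 2) 1).2 hasSum_zeta_two
  simp only [Finset.range_one, Finset.sum_singleton, Nat.cast_zero] at h
  have h2 : π ^ 2 / 6 - (1:ℝ) / (0:ℝ) ^ 2 = π ^ 2 / 6 := by norm_num
  rw [h2] at h
  rw [Li, ← h.tsum_eq]
  congr 1; funext m; push_cast; norm_num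

lemma Li3_one : Li 3 1 = zeta3 := by simp [Li, zeta3]

lemma cont_Li {k : ℕ} (hk : 2 ≤ k) : ContinuousOn (Li k) (Icc (0:ℝ) 1) := by
  have : ContinuousOn (fun z : ℝ => ∑' m : ℕ, z ^ (m + 1) / ((m : ℝ) + 1) ^ k)
      (Icc (0:ℝ) 1) := by
    refine continuousOn_tsum (fun m => (continuousOn_pow _).div_const _) summable_inv_sq
      (fun m z hz => ?_)
    rw [Real.norm_eq_abs, abs_div, abs_pow, abs_of_nonneg hz.1,
      abs_of_nonneg (by positivity : (0:ℝ) ≤ ((m : ℝ) + 1) ^ k)]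
    have h1 : ((m : ℝ) + 1) ^ 2 ≤ ((m : ℝ) + 1) ^ k :=
      pow_le_pow_right₀ (by linarith [Nat.cast_nonneg (α := ℝ) m]) hk
    have h2 : z ^ (m + 1) ≤ 1 := pow_le_one₀ hz.1 hz.2
    have h3 : (0:ℝ) < ((m : ℝ) + 1) ^ 2 := by positivity
    calc z ^ (m + 1) / ((m : ℝ) + 1) ^ k
        ≤ 1 / ((m : ℝ) + 1) ^ k := by
          apply div_le_div_of_nonneg_right h2 (by positivity) |>.trans_eq rfl
      _ ≤ 1 / ((m : ℝ) + 1) ^ 2 := by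
          apply one_div_le_one_div_of_le h3 h1
  exact this

lemma Li1_eq {z : ℝ} (h0 : 0 < z) (h1 : z < 1) : Li 1 z = -Real.log (1 - z) := by
  have h := hasSum_pow_div_log_of_abs_lt_one (x := z) (by rw [abs_of_pos h0]; exact h1)
  rw [Li, ← h.tsum_eq]
  congr 1; funext m; push_cast; norm_num

lemma const_on_Ioo {F : ℝ → ℝ} (h : ∀ t ∈ Ioo (0:ℝ) 1, HasDerivAt F 0 t)
    {x y : ℝ} (hx : x ∈ Ioo (0:ℝ) 1) (hy : y ∈ Ioo (0:ℝ) 1) : F x = F y := by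
  have key : ∀ a b : ℝ, a ∈ Ioo (0:ℝ) 1 → b ∈ Ioo (0:ℝ) 1 → a ≤ b → F b = F a := by
    intro a b ha hb hab
    have hsub : Icc a b ⊆ Ioo (0:ℝ) 1 := fun t ht =>
      ⟨lt_of_lt_of_le ha.1 ht.1, lt_of_le_of_lt ht.2 hb.2⟩
    exact constant_of_has_deriv_right_zero
      (fun t ht => (h t (hsub ht)).continuousAt.continuousWithinAt)
      (fun t ht => (h t (hsub ⟨ht.1, ht.2.le⟩)).hasDerivWithinAt)
      b (right_mem_Icc.2 hab)
  rcases le_total x y with hxy | hxy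
  · exact (key x y hx hy hxy).symm
  · exact key y x hy hx hxy

lemma neBot_one : (𝓝[Ioo (0:ℝ) 1] 1).NeBot := by
  refine mem_closure_iff_nhdsWithin_neBot.mp ?_
  rw [closure_Ioo (by norm_num : (0:ℝ) ≠ 1)]
  exact right_mem_Icc.2 zero_le_one

lemma tendsto_Li_one {k : ℕ} (hk : 2 ≤ k) :
    Tendsto (Li k) (𝓝[Ioo (0:ℝ) 1] 1) (𝓝 (Li k 1)) := by
  have h := (cont_Li hk 1 (right_mem_Icc.2 zero_le_one))
  exact h.mono Ioo_subset_Icc_self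

lemma tendsto_Li2_one_sub :
    Tendsto (fun z : ℝ => Li 2 (1 - z)) (𝓝[Ioo (0:ℝ) 1] 1) (𝓝 0) := by
  have h0 : ContinuousWithinAt (Li 2) (Icc (0:ℝ) 1) 0 :=
    cont_Li le_rfl 0 (left_mem_Icc.2 zero_le_one)
  have hmap : Tendsto (fun z : ℝ => 1 - z) (𝓝[Ioo (0:ℝ) 1] 1) (𝓝[Icc (0:ℝ) 1] 0) := by
    rw [tendsto_nhdsWithin_iff]
    constructor
    · have hcont : Continuous (fun z : ℝ => 1 - z) := continuous_const.sub continuous_id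
      have := hcont.tendsto 1
      norm_num at this
      exact this.mono_left nhdsWithin_le_nhds
    · filter_upwards [self_mem_nhdsWithin] with z hz
      exact ⟨by linarith [hz.2], by linarith [hz.1]⟩
  have := h0.tendsto.comp hmap
  rwa [Li_zero] at this

lemma tendsto_log_one_sub_mul :
    Tendsto (fun z : ℝ => Real.log z * Real.log (1 - z)) (𝓝[Ioo (0:ℝ) 1] 1) (𝓝 0) := by
  have hbound : ∀ z ∈ Ioo (0:ℝ) 1,
      |Real.log z * Real.log (1 - z)| ≤ z⁻¹ * |Real.log (1 - z) * (1 - z)| := by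
    intro z hz
    have hz0 := hz.1
    have hz1 := hz.2
    have h1z : 0 < 1 - z := by linarith
    have hlz : Real.log z ≤ 0 := Real.log_nonpos hz0.le hz1.le
    have hl1z : Real.log (1 - z) ≤ 0 := Real.log_nonpos h1z.le (by linarith)
    have hlogb : -Real.log z ≤ (1 - z) / z := by
      have := Real.log_le_sub_one_of_pos (x := z⁻¹) (by positivity)
      rw [Real.log_inv] at this
      have heq : z⁻¹ - 1 = (1 - z) / z := by field_simp
      linarith [heq]
    rw [abs_mul, abs_mul, abs_of_nonneg (le_of_lt (by positivity : (0:ℝ) < (1-z))),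
      abs_of_nonpos hlz, abs_of_nonpos hl1z]
    calc -Real.log z * -Real.log (1 - z) ≤ (1 - z) / z * -Real.log (1 - z) := by
          apply mul_le_mul_of_nonneg_right hlogb (by linarith)
      _ = z⁻¹ * (-Real.log (1 - z) * (1 - z)) := by
          rw [div_eq_mul_inv]; ring
  have hxlx : Tendsto (fun z : ℝ => Real.log (1 - z) * (1 - z)) (𝓝[Ioo (0:ℝ) 1] 1) (𝓝 0) := by
    have hmain : Tendsto (fun x : ℝ => Real.log x * x) (𝓝[>] (0:ℝ)) (𝓝 0) := by
      have := tendsto_log_mul_rpow_nhdsGT_zero (r := 1) one_pos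
      refine this.congr' ?_
      filter_upwards [self_mem_nhdsWithin] with x hx
      rw [Real.rpow_one]
    have hmap : Tendsto (fun z : ℝ => 1 - z) (𝓝[Ioo (0:ℝ) 1] 1) (𝓝[>] (0:ℝ)) := by
      rw [tendsto_nhdsWithin_iff]
      constructor
      · have hcont : Continuous (fun z : ℝ => 1 - z) := continuous_const.sub continuous_id
        have := hcont.tendsto 1
        norm_num at this
        exact this.mono_left nhdsWithin_le_nhds
      · filter_upwards [self_mem_nhdsWithin] with z hz
        simpa using by linarith [hz.2] 
    exact hmain.comp hmap
  have hinv : Tendsto (fun z : ℝ => z⁻¹) (𝓝[Ioo (0:ℝ) 1] 1) (𝓝 1) := by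
    have hca : ContinuousAt (fun z : ℝ => z⁻¹) 1 := continuousAt_inv₀ one_ne_zero
    have h2 := hca.tendsto
    rw [inv_one] at h2
    exact h2.mono_left nhdsWithin_le_nhds
  have habs : Tendsto (fun z : ℝ => z⁻¹ * |Real.log (1 - z) * (1 - z)|)
      (𝓝[Ioo (0:ℝ) 1] 1) (𝓝 0) := by
    have := hinv.mul hxlx.abs
    simpa using this
  refine squeeze_zero_norm' ?_ habs
  filter_upwards [self_mem_nhdsWithin] with z hz
  exact hbound z hz

lemma hasDerivAt_one_sub (z : ℝ) : HasDerivAt (fun z : ℝ => 1 - z) (-1) z := by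
  simpa using (hasDerivAt_id z).const_sub 1

lemma mem_one_sub {z : ℝ} (hz : z ∈ Ioo (0:ℝ) 1) : 1 - z ∈ Ioo (0:ℝ) 1 :=
  ⟨by linarith [hz.2], by linarith [hz.1]⟩

lemma euler_reflection {z : ℝ} (hz : z ∈ Ioo (0:ℝ) 1) :
    Li 2 z + Li 2 (1 - z) + Real.log z * Real.log (1 - z) = π ^ 2 / 6 := by
  set G : ℝ → ℝ := fun z => Li 2 z + Li 2 (1 - z) + Real.log z * Real.log (1 - z) with hG
  have hderiv : ∀ t ∈ Ioo (0:ℝ) 1, HasDerivAt G 0 t := by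
    intro t ht
    obtain ⟨ht0, ht1⟩ := ht
    have h1t : 0 < 1 - t := by linarith
    have hA : HasDerivAt (Li 2) (Li 1 t / t) t := hasDerivAt_Li 1 ⟨ht0, ht1⟩
    have hB : HasDerivAt (fun z : ℝ => Li 2 (1 - z)) (Li 1 (1 - t) / (1 - t) * (-1)) t :=
      (hasDerivAt_Li 1 (mem_one_sub ⟨ht0, ht1⟩)).comp t (hasDerivAt_one_sub t)
    have hlog2 : HasDerivAt (fun z : ℝ => Real.log (1 - z)) ((1 - t)⁻¹ * (-1)) t :=
      (Real.hasDerivAt_log h1t.ne').comp t (hasDerivAt_one_sub t)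
    have hC : HasDerivAt (fun z : ℝ => Real.log z * Real.log (1 - z))
        (t⁻¹ * Real.log (1 - t) + Real.log t * ((1 - t)⁻¹ * (-1))) t :=
      (Real.hasDerivAt_log ht0.ne').mul hlog2
    have hsum := (hA.add hB).add hC
    refine hsum.congr_deriv (Eq.symm ?_)
    rw [Li1_eq ht0 ht1, Li1_eq h1t (by linarith), show (1:ℝ) - (1 - t) = t by ring]
    field_simp
    ring
  have hconst : ∀ w ∈ Ioo (0:ℝ) 1, G w = G z := fun w hw => const_on_Ioo hderiv hw hz
  have hlim : Tendsto G (𝓝[Ioo (0:ℝ) 1] 1) (𝓝 (π ^ 2 / 6 + 0 + 0)) := by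
    have h1 := tendsto_Li_one (k := 2) le_rfl
    rw [Li2_one] at h1
    exact (h1.add tendsto_Li2_one_sub).add tendsto_log_one_sub_mul
  haveI := neBot_one
  have hlim2 : Tendsto G (𝓝[Ioo (0:ℝ) 1] 1) (𝓝 (G z)) := by
    refine tendsto_const_nhds.congr' ?_
    filter_upwards [self_mem_nhdsWithin] with w hw
    exact (hconst w hw).symm
  have := tendsto_nhds_unique hlim2 hlim
  simpa using this


lemma summable_pow_succ {x : ℝ} (h0 : 0 ≤ x) (h1 : x < 1) :
    Summable (fun a : ℕ => x ^ (a + 1)) := by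
  have := (summable_geometric_of_lt_one h0 h1).mul_left x
  refine this.congr fun a => ?_
  rw [← pow_succ']

lemma Li21_le {x : ℝ} (h0 : 0 ≤ x) (h1 : x < 1) :
    Li21 x ≤ (x * (1 - x)⁻¹) ^ 2 := by
  have hs : Summable (fun p : ℕ × ℕ => x ^ (p.1 + 1) * x ^ (p.2 + 1)) :=
    Summable.mul_of_nonneg (f := fun a : ℕ => x ^ (a + 1)) (g := fun b : ℕ => x ^ (b + 1))
      (summable_pow_succ h0 h1) (summable_pow_succ h0 h1)
      (fun a => pow_nonneg h0 _) (fun a => pow_nonneg h0 _)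
  have hle : Li21 x ≤ ∑' p : ℕ × ℕ, x ^ (p.1 + 1) * x ^ (p.2 + 1) := by
    refine Summable.tsum_le_tsum (fun p => ?_) (summable_li21 h0 h1) hs
    have hd : (1:ℝ) ≤ ((p.1 : ℝ) + 1) ^ 2 * ((p.1 : ℝ) + (p.2 : ℝ) + 2) := by
      have h1' : (1:ℝ) ≤ ((p.1 : ℝ) + 1) ^ 2 :=
        one_le_pow₀ (by linarith [Nat.cast_nonneg (α := ℝ) p.1])
      nlinarith [Nat.cast_nonneg (α := ℝ) p.1, Nat.cast_nonneg (α := ℝ) p.2]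
    calc x ^ (p.1 + p.2 + 2) / (((p.1 : ℝ) + 1) ^ 2 * ((p.1 : ℝ) + (p.2 : ℝ) + 2))
        ≤ x ^ (p.1 + p.2 + 2) := div_le_self (by positivity) hd
      _ = x ^ (p.1 + 1) * x ^ (p.2 + 1) := by rw [← pow_add]; congr 1; omega
  have hval : ∑' p : ℕ × ℕ, x ^ (p.1 + 1) * x ^ (p.2 + 1) = (x * (1 - x)⁻¹) ^ 2 := by
    have hn : Summable (fun a : ℕ => ‖x ^ (a + 1)‖) := by
      refine (summable_pow_succ h0 h1).congr fun a => ?_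
      rw [Real.norm_eq_abs, abs_pow, abs_of_nonneg h0]
    rw [← tsum_mul_tsum_of_summable_norm hn hn]
    have : ∑' a : ℕ, x ^ (a + 1) = x * (1 - x)⁻¹ := by
      rw [← tsum_geometric_of_lt_one h0 h1, ← tsum_mul_left]
      exact tsum_congr fun a => pow_succ' x a
    rw [this, sq]
  exact hle.trans_eq hval

lemma Li21_nonneg {x : ℝ} (h0 : 0 ≤ x) : 0 ≤ Li21 x :=
  tsum_nonneg fun p => by positivity

lemma tendsto_Li21_one_sub :
    Tendsto (fun z : ℝ => Li21 (1 - z)) (𝓝[Ioo (0:ℝ) 1] 1) (𝓝 0) := by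
  have hB : Tendsto (fun z : ℝ => ((1 - z) * z⁻¹) ^ 2) (𝓝[Ioo (0:ℝ) 1] 1) (𝓝 0) := by
    have hcont : ContinuousAt (fun z : ℝ => ((1 - z) * z⁻¹) ^ 2) 1 := by
      have : ContinuousAt (fun z : ℝ => z⁻¹) 1 := continuousAt_inv₀ one_ne_zero
      exact ((continuousAt_const.sub continuousAt_id).mul this).pow 2
    have h2 := hcont.tendsto.mono_left (nhdsWithin_le_nhds (s := Ioo (0:ℝ) 1))
    convert h2 using 2
    norm_num
  refine squeeze_zero_norm' ?_ hB
  filter_upwards [self_mem_nhdsWithin] with z hz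
  have h10 : 0 ≤ 1 - z := by linarith [hz.2]
  have h11 : 1 - z < 1 := by linarith [hz.1]
  rw [Real.norm_eq_abs, abs_of_nonneg (Li21_nonneg h10)]
  have := Li21_le h10 h11
  rwa [show (1:ℝ) - (1 - z) = z by ring] at this

theorem stmt8 (z : ℝ) (h0 : 0 < z) (h1 : z < 1) :
    Li21 (1 - z) =
      2 * Li 3 z - Real.log z * Li 2 z - (π ^ 2 / 6) * Real.log z - 2 * zeta3 := by
  set F : ℝ → ℝ := fun z => Li21 (1 - z) -
    (2 * Li 3 z - Real.log z * Li 2 z - (π ^ 2 / 6) * Real.log z - 2 * zeta3) with hF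
  have hz : z ∈ Ioo (0:ℝ) 1 := ⟨h0, h1⟩
  have hderiv : ∀ t ∈ Ioo (0:ℝ) 1, HasDerivAt F 0 t := by
    intro t ht
    obtain ⟨ht0, ht1⟩ := ht
    have h1t : 0 < 1 - t := by linarith
    have hA : HasDerivAt (fun z : ℝ => Li21 (1 - z))
        (Li 2 (1 - t) * (1 - (1 - t))⁻¹ * (-1)) t :=
      (hasDerivAt_Li21 (mem_one_sub ⟨ht0, ht1⟩)).comp t (hasDerivAt_one_sub t)
    have hB : HasDerivAt (Li 3) (Li 2 t / t) t := hasDerivAt_Li 2 ⟨ht0, ht1⟩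
    have hC : HasDerivAt (fun z : ℝ => Real.log z * Li 2 z)
        (t⁻¹ * Li 2 t + Real.log t * (Li 1 t / t)) t :=
      (Real.hasDerivAt_log ht0.ne').mul (hasDerivAt_Li 1 ⟨ht0, ht1⟩)
    have hsum := hA.sub ((((hB.const_mul 2).sub hC).sub
      ((Real.hasDerivAt_log ht0.ne').const_mul (π ^ 2 / 6))).sub
      (hasDerivAt_const t (2 * zeta3)))
    refine hsum.congr_deriv (Eq.symm ?_)
    have he := euler_reflection (z := t) ⟨ht0, ht1⟩
    rw [Li1_eq ht0 ht1, show (1:ℝ) - (1 - t) = t by ring]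
    have ht0' : (t:ℝ) ≠ 0 := ht0.ne'
    field_simp
    linear_combination 6 * he
  have hconst : ∀ w ∈ Ioo (0:ℝ) 1, F w = F z := fun w hw => const_on_Ioo hderiv hw hz
  haveI := neBot_one
  have hlog : Tendsto Real.log (𝓝[Ioo (0:ℝ) 1] 1) (𝓝 0) := by
    have := (Real.continuousAt_log one_ne_zero).tendsto
    rw [Real.log_one] at this
    exact this.mono_left nhdsWithin_le_nhds
  have hLi3 := tendsto_Li_one (k := 3) (by norm_num)
  rw [Li3_one] at hLi3
  have hLi2 := tendsto_Li_one (k := 2) le_rfl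
  have hlim : Tendsto F (𝓝[Ioo (0:ℝ) 1] 1)
      (𝓝 (0 - (2 * zeta3 - 0 * Li 2 1 - (π ^ 2 / 6) * 0 - 2 * zeta3))) :=
    tendsto_Li21_one_sub.sub ((((hLi3.const_mul 2).sub (hlog.mul hLi2)).sub
      (hlog.const_mul (π ^ 2 / 6))).sub tendsto_const_nhds)
  have h00 : (0:ℝ) - (2 * zeta3 - 0 * Li 2 1 - (π ^ 2 / 6) * 0 - 2 * zeta3) = 0 := by ring
  rw [h00] at hlim
  have hlim2 : Tendsto F (𝓝[Ioo (0:ℝ) 1] 1) (𝓝 (F z)) := by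
    refine tendsto_const_nhds.congr' ?_
    filter_upwards [self_mem_nhdsWithin] with w hw
    exact (hconst w hw).symm
  have hFz : F z = 0 := tendsto_nhds_unique hlim2 hlim
  have := hFz
  rw [hF] at this
  simp only [sub_eq_zero] at this
  exact this
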